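/- A trim NFA N is atomic if and only if N^{R D} (the determinization of the reversal of N) is a minimal DFA, i.e., a DFA with the fewest states accepting L(N)^R. -/

import Mathlib

/-! Basic definitions: left quotients, atoms, and operations on finite automata. -/

/-- The left quotient of a language `L` by a word `w`: `w⁻¹L = {x | w ++ x ∈ L}`. -/
def leftQuot {α : Type} (L : Language α) (w : List α) : Language α := {x | w ++ x ∈ L}

/-- The set of all left quotients of `L`. -/
def quots {α : Type} (L : Language α) : Set (Language α) := {K | ∃ w : List α, K = leftQuot L w}

/-- `A` is an atom of `L`: a non-empty intersection `K̃_0 ∩ ⋯ ∩ K̃_{n−1}` where each `K̃_i` is a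
quotient `K_i` of `L` or its complement (`S` is the set of uncomplemented quotients, so a word is
in the intersection iff it belongs exactly to the quotients in `S`). -/
def IsAtomOf {α : Type} (L A : Language α) : Prop :=
  (∃ x, x ∈ A) ∧ ∃ S : Set (Language α), S ⊆ quots L ∧
    A = {x | ∀ K ∈ quots L, (x ∈ K ↔ K ∈ S)}

/-- A positive atom: at least one term of its defining intersection is uncomplemented,
equivalently the atom is contained in some quotient of `L`. -/
def IsPositiveAtomOf {α : Type} (L A : Language α) : Prop :=
  IsAtomOf L A ∧ ∃ K ∈ quots L, ∀ x ∈ A, x ∈ K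

namespace NFA

/-- The right language of a state `q`: words accepted starting from `q`. -/
def rightLang {α σ : Type} (M : NFA α σ) (q : σ) : Language α :=
  {w | ∃ p ∈ M.accept, p ∈ M.evalFrom {q} w}

/-- The left language of a state `q`: words leading from the initial states to `q`. -/
def leftLang {α σ : Type} (M : NFA α σ) (q : σ) : Language α :=
  {w | q ∈ M.eval w}

/-- An NFA is trim if every state has a non-empty left language and right language. -/
def IsTrim {α σ : Type} (M : NFA α σ) : Prop :=
  ∀ q, (∃ w, w ∈ M.leftLang q) ∧ (∃ w, w ∈ M.rightLang q)

/-- An NFA is reduced if distinct states have distinct right languages. -/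
def IsReduced {α σ : Type} (M : NFA α σ) : Prop :=
  ∀ q p, M.rightLang q = M.rightLang p → q = p

/-- An NFA is atomic if the right language of every state is a union of positive atoms of the
accepted language. -/
def IsAtomic {α σ : Type} (M : NFA α σ) : Prop :=
  ∀ q, ∃ 𝒜 : Set (Language α), (∀ A ∈ 𝒜, IsPositiveAtomOf M.accepts A) ∧
    M.rightLang q = {w | ∃ A ∈ 𝒜, w ∈ A}

/-- Reversal of an NFA: interchange initial and final states and reverse all transitions. -/
def rev {α σ : Type} (M : NFA α σ) : NFA α σ :=
  ⟨fun q a => {p | q ∈ M.step p a}, M.accept, M.start⟩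

/-- States of the determinization of an NFA: the subsets of states reachable from the initial
subset. -/
def detStates {α σ : Type} (M : NFA α σ) : Type := {S : Set σ // ∃ w, M.eval w = S}

instance {α σ : Type} [Finite σ] (M : NFA α σ) : Finite M.detStates :=
  Subtype.finite

/-- Determinization of an NFA by the subset construction, keeping only the subsets reachable
from the initial subset. -/
def det {α σ : Type} (M : NFA α σ) : DFA α M.detStates where
  step S a := ⟨M.stepSet S.1 a, by
    obtain ⟨w, hw⟩ := S.2
    exact ⟨w ++ [a], by rw [NFA.eval_append_singleton, hw]⟩⟩
  start := ⟨M.start, [], rfl⟩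
  accept := {S | ∃ p ∈ M.accept, p ∈ S.1}

end NFA

/-- Reversal of a DFA, yielding an NFA. -/
def DFA.rev {α σ : Type} (M : DFA α σ) : NFA α σ :=
  ⟨fun q a => {p | M.step p a = q}, M.accept, {M.start}⟩

/-- A DFA is minimal if no DFA accepting the same language has fewer states. -/
def DFA.IsMinimal {α σ : Type} (M : DFA α σ) : Prop :=
  ∀ (σ' : Type) (_ : Finite σ') (M' : DFA α σ'), M'.accepts = M.accepts →
    Nat.card σ ≤ Nat.card σ'

section Aux
variable {α σ : Type}

theorem NFA.evalFrom_cons' (M : NFA α σ) (S : Set σ) (a : α) (w : List α) :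
    M.evalFrom S (a :: w) = M.evalFrom (M.stepSet S a) w := rfl

theorem NFA.evalFrom_append' (M : NFA α σ) (S : Set σ) (w x : List α) :
    M.evalFrom S (w ++ x) = M.evalFrom (M.evalFrom S w) x := by
  simp [NFA.evalFrom, List.foldl_append]

theorem NFA.mem_evalFrom_iff' (M : NFA α σ) (S : Set σ) (w : List α) (p : σ) :
    p ∈ M.evalFrom S w ↔ ∃ q ∈ S, p ∈ M.evalFrom {q} w := by
  induction w generalizing S with
  | nil => simp
  | cons a w ih =>
    rw [NFA.evalFrom_cons', ih]
    constructor
    · rintro ⟨q', hq', hp⟩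
      rw [NFA.mem_stepSet] at hq'
      obtain ⟨q, hq, hstep⟩ := hq'
      refine ⟨q, hq, ?_⟩
      rw [NFA.evalFrom_cons', ih]
      exact ⟨q', (M.mem_stepSet (s := q') (S := {q}) (a := a)).2 ⟨q, rfl, hstep⟩, hp⟩
    · rintro ⟨q, hq, hp⟩
      rw [NFA.evalFrom_cons', ih] at hp
      obtain ⟨q', hq', hp⟩ := hp
      rw [NFA.mem_stepSet] at hq'
      obtain ⟨q'', hq'', hstep⟩ := hq'
      rcases hq'' with rfl
      exact ⟨q', (M.mem_stepSet (s := q') (S := S) (a := a)).2 ⟨q'', hq, hstep⟩, hp⟩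

theorem NFA.mem_rev_evalFrom (M : NFA α σ) (S : Set σ) (w : List α) (p : σ) :
    p ∈ M.rev.evalFrom S w ↔ ∃ q ∈ S, q ∈ M.evalFrom {p} w.reverse := by
  induction w generalizing S with
  | nil => simp
  | cons a w ih =>
    rw [NFA.evalFrom_cons', ih]
    have hrev : (a :: w).reverse = w.reverse ++ [a] := by simp
    rw [hrev]
    constructor
    · rintro ⟨q', hq', hp⟩
      rw [NFA.mem_stepSet] at hq'
      obtain ⟨q, hq, hstep⟩ := hq'
      refine ⟨q, hq, ?_⟩
      rw [NFA.evalFrom_append, NFA.evalFrom_singleton, NFA.mem_stepSet]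
      exact ⟨q', hp, hstep⟩
    · rintro ⟨q, hq, hp⟩
      rw [NFA.evalFrom_append, NFA.evalFrom_singleton, NFA.mem_stepSet] at hp
      obtain ⟨q', hq', hstep⟩ := hp
      exact ⟨q', (M.rev.mem_stepSet (s := q') (S := S) (a := a)).2 ⟨q, hq, hstep⟩, hq'⟩

theorem NFA.mem_rev_eval (M : NFA α σ) (w : List α) (q : σ) :
    q ∈ M.rev.eval w ↔ w.reverse ∈ M.rightLang q :=
  M.mem_rev_evalFrom M.accept w q

theorem NFA.mem_accepts_iff_start (M : NFA α σ) (x : List α) :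
    x ∈ M.accepts ↔ ∃ p ∈ M.start, x ∈ M.rightLang p := by
  rw [NFA.mem_accepts]
  constructor
  · rintro ⟨a, ha, hx⟩
    rw [NFA.mem_evalFrom_iff'] at hx
    obtain ⟨p, hp, hx⟩ := hx
    exact ⟨p, hp, a, ha, hx⟩
  · rintro ⟨p, hp, a, ha, hx⟩
    exact ⟨a, ha, (M.mem_evalFrom_iff' M.start x a).2 ⟨p, hp, hx⟩⟩

theorem NFA.rev_accepts (M : NFA α σ) : M.rev.accepts = M.accepts.reverse := by
  ext w
  rw [Language.mem_reverse, NFA.mem_accepts, NFA.mem_accepts_iff_start]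
  constructor
  · rintro ⟨p, hp, hq⟩
    exact ⟨p, hp, (M.mem_rev_eval w p).1 hq⟩
  · rintro ⟨p, hp, hq⟩
    exact ⟨p, hp, (M.mem_rev_eval w p).2 hq⟩

theorem NFA.det_evalFrom (M : NFA α σ) (s : M.detStates) (w : List α) :
    (M.det.evalFrom s w).1 = M.evalFrom s.1 w := by
  induction w generalizing s with
  | nil => rfl
  | cons a w ih => exact ih (M.det.step s a)

theorem NFA.det_eval (M : NFA α σ) (w : List α) :
    (M.det.eval w).1 = M.eval w :=
  M.det_evalFrom M.det.start w

theorem NFA.det_reachable (M : NFA α σ) (s : M.detStates) : ∃ w, M.det.eval w = s := by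
  obtain ⟨w, hw⟩ := s.2
  exact ⟨w, Subtype.ext (by rw [NFA.det_eval, hw])⟩

theorem NFA.det_accepts (M : NFA α σ) : M.det.accepts = M.accepts := by
  ext w
  rw [DFA.mem_accepts, NFA.mem_accepts]
  show (∃ p ∈ M.accept, p ∈ (M.det.eval w).1) ↔ _
  rw [NFA.det_eval]
  rfl

theorem DFA.acceptsFrom_eval (D : DFA α σ) (w : List α) :
    D.acceptsFrom (D.eval w) = leftQuot D.accepts w := by
  ext u
  rw [DFA.mem_acceptsFrom]
  show _ ↔ w ++ u ∈ D.accepts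
  rw [DFA.mem_accepts]
  unfold DFA.eval
  rw [DFA.evalFrom_of_append]

theorem DFA.acceptsFrom_step (D : DFA α σ) (s : σ) (a : α) :
    D.acceptsFrom (D.step s a) = {u | a :: u ∈ D.acceptsFrom s} := rfl

end Aux

section Min
variable {α σ : Type}

/-- Setoid identifying states with the same right language. -/
def DFA.rlSetoid (D : DFA α σ) : Setoid σ :=
  ⟨fun s t => D.acceptsFrom s = D.acceptsFrom t,
   ⟨fun _ => rfl, fun h => h.symm, fun h h' => h.trans h'⟩⟩

/-- Quotient DFA identifying states with the same right language. -/
def DFA.quotDFA (D : DFA α σ) : DFA α (Quotient D.rlSetoid) where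
  step c a := Quotient.liftOn c (fun s => ⟦D.step s a⟧) (by
    intro s t h
    refine Quotient.sound ?_
    show D.acceptsFrom _ = D.acceptsFrom _
    rw [DFA.acceptsFrom_step, DFA.acceptsFrom_step]
    exact Set.ext fun u => by
      constructor <;> intro hu
      · exact (Set.ext_iff.1 h (a :: u)).1 hu
      · exact (Set.ext_iff.1 h (a :: u)).2 hu)
  start := ⟦D.start⟧
  accept := {c | Quotient.liftOn c (fun s => s ∈ D.accept) (by
    intro s t h
    have h0 := Set.ext_iff.1 h []
    change D.evalFrom s [] ∈ D.accept ↔ D.evalFrom t [] ∈ D.accept at h0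
    simp only [DFA.evalFrom_nil] at h0
    exact propext h0)}

theorem DFA.quotDFA_evalFrom (D : DFA α σ) (s : σ) (w : List α) :
    D.quotDFA.evalFrom ⟦s⟧ w = ⟦D.evalFrom s w⟧ := by
  induction w generalizing s with
  | nil => rfl
  | cons a w ih => exact ih (D.step s a)

theorem DFA.quotDFA_accepts (D : DFA α σ) : D.quotDFA.accepts = D.accepts := by
  ext w
  rw [DFA.mem_accepts, DFA.mem_accepts]
  show D.quotDFA.evalFrom ⟦D.start⟧ w ∈ _ ↔ _
  rw [DFA.quotDFA_evalFrom]
  rfl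

/-- Right-language injectivity. -/
def DFA.RLInj (D : DFA α σ) : Prop :=
  ∀ s t, D.acceptsFrom s = D.acceptsFrom t → s = t

theorem DFA.rlInj_of_min [Finite σ] (D : DFA α σ)
    (hmin : ∀ (σ' : Type) (_ : Finite σ') (D' : DFA α σ'), D'.accepts = D.accepts →
      Nat.card σ ≤ Nat.card σ') : D.RLInj := by
  have h1 := hmin (Quotient D.rlSetoid) (Quotient.finite _) D.quotDFA D.quotDFA_accepts
  have h2 : Nat.card (Quotient D.rlSetoid) ≤ Nat.card σ :=
    Nat.card_le_card_of_surjective (Quotient.mk _) Quotient.mk''_surjective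
  have hbij : Function.Bijective (Quotient.mk D.rlSetoid) :=
    (Nat.bijective_iff_surjective_and_card _).2
      ⟨Quotient.mk''_surjective, le_antisymm h1 h2 |>.symm ▸ rfl⟩
  intro s t h
  exact hbij.1 (Quotient.sound h)

theorem DFA.min_of_rlInj [Finite σ] (D : DFA α σ)
    (hreach : ∀ s : σ, ∃ w, D.eval w = s) (hinj : D.RLInj) :
    ∀ (σ' : Type) (_ : Finite σ') (D' : DFA α σ'), D'.accepts = D.accepts →
      Nat.card σ ≤ Nat.card σ' := by
  intro σ' hfin D' hD'
  choose wd hwd using hreach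
  let f : σ → σ' := fun s => D'.eval (wd s)
  have hfinj : Function.Injective f := by
    intro s t hst
    apply hinj
    rw [← hwd s, ← hwd t, DFA.acceptsFrom_eval, DFA.acceptsFrom_eval]
    have : leftQuot D'.accepts (wd s) = leftQuot D'.accepts (wd t) := by
      rw [← DFA.acceptsFrom_eval, ← DFA.acceptsFrom_eval]
      exact congrArg D'.acceptsFrom hst
    rwa [hD'] at this
  exact Nat.card_le_card_of_injective f hfinj

end Min

section Atomic
variable {α σ : Type}

/-- Saturation: every right language is closed under atomic equivalence. -/
def NFA.Sat (M : NFA α σ) : Prop :=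
  ∀ (q : σ) (x y : List α), (∀ K ∈ quots M.accepts, x ∈ K ↔ y ∈ K) →
    x ∈ M.rightLang q → y ∈ M.rightLang q

theorem NFA.concat_mem (M : NFA α σ) {q : σ} {w x : List α}
    (hw : w ∈ M.leftLang q) (hx : x ∈ M.rightLang q) : w ++ x ∈ M.accepts := by
  obtain ⟨p, hp, hpx⟩ := hx
  refine ⟨p, hp, ?_⟩
  show p ∈ M.evalFrom M.start (w ++ x)
  rw [NFA.evalFrom_append']
  exact (M.mem_evalFrom_iff' _ x p).2 ⟨q, hw, hpx⟩

theorem NFA.atomic_of_sat (M : NFA α σ) (htrim : M.IsTrim) (hsat : M.Sat) :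
    M.IsAtomic := by
  intro q
  refine ⟨{A | ∃ x ∈ M.rightLang q,
    A = {z : List α | ∀ K ∈ quots M.accepts, z ∈ K ↔ x ∈ K}}, ?_, ?_⟩
  · rintro A ⟨x, hx, rfl⟩
    obtain ⟨⟨w, hw⟩, -⟩ := htrim q
    have hKmem : leftQuot M.accepts w ∈ quots M.accepts := ⟨w, rfl⟩
    have hxK : x ∈ leftQuot M.accepts w := M.concat_mem hw hx
    refine ⟨⟨⟨x, fun K _ => Iff.rfl⟩,
      {K | K ∈ quots M.accepts ∧ x ∈ K}, fun K hK => hK.1, ?_⟩,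
      leftQuot M.accepts w, hKmem, fun z hz => (hz _ hKmem).2 hxK⟩
    ext z
    simp only [Set.mem_setOf_eq]
    constructor
    · intro h K hK
      exact (h K hK).trans ⟨fun hx' => ⟨hK, hx'⟩, fun h' => h'.2⟩
    · intro h K hK
      exact (h K hK).trans ⟨fun h' => h'.2, fun hx' => ⟨hK, hx'⟩⟩
  · ext z
    simp only [Set.mem_setOf_eq]
    constructor
    · intro hz
      exact ⟨_, ⟨z, hz, rfl⟩, fun K _ => Iff.rfl⟩
    · rintro ⟨A, ⟨x, hx, rfl⟩, hzA⟩
      exact hsat q x z (fun K hK => (hzA K hK).symm) hx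

theorem NFA.sat_of_atomic (M : NFA α σ) (hA : M.IsAtomic) : M.Sat := by
  intro q x y hsim hx
  obtain ⟨𝒜, hpos, heq⟩ := hA q
  rw [heq] at hx ⊢
  obtain ⟨A, hA𝒜, hxA⟩ := hx
  refine ⟨A, hA𝒜, ?_⟩
  obtain ⟨⟨-, S, hS, rfl⟩, -⟩ := hpos A hA𝒜
  intro K hK
  exact ((hsim K hK).symm).trans (hxA K hK)

theorem simEquiv {α : Type} (L : Language α) (x y : List α) :
    (∀ K ∈ quots L, x ∈ K ↔ y ∈ K) ↔
      leftQuot L.reverse x.reverse = leftQuot L.reverse y.reverse := by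
  constructor
  · intro h
    ext u
    show (x.reverse ++ u) ∈ L.reverse ↔ (y.reverse ++ u) ∈ L.reverse
    rw [Language.mem_reverse, Language.mem_reverse, List.reverse_append,
      List.reverse_append, List.reverse_reverse, List.reverse_reverse]
    exact h (leftQuot L u.reverse) ⟨u.reverse, rfl⟩
  · intro h K hK
    obtain ⟨t, rfl⟩ := hK
    have ht := Set.ext_iff.1 h t.reverse
    show t ++ x ∈ L ↔ t ++ y ∈ L
    simpa [leftQuot, Language.mem_reverse, List.reverse_append] using ht

theorem rlInj_iff_sat (M : NFA α σ) : M.rev.det.RLInj ↔ M.Sat := by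
  have hacc : M.rev.det.accepts = M.accepts.reverse := by
    rw [NFA.det_accepts, NFA.rev_accepts]
  constructor
  · intro hinj q x y hsim hx
    have hq := (simEquiv M.accepts x y).1 hsim
    have hs : M.rev.det.acceptsFrom (M.rev.det.eval x.reverse) =
        M.rev.det.acceptsFrom (M.rev.det.eval y.reverse) := by
      rw [DFA.acceptsFrom_eval, DFA.acceptsFrom_eval, hacc]
      exact hq
    have hst := hinj _ _ hs
    have h1 : q ∈ (M.rev.det.eval x.reverse).1 := by
      rw [NFA.det_eval]
      exact (M.mem_rev_eval x.reverse q).2 (by rwa [List.reverse_reverse])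
    rw [hst, NFA.det_eval] at h1
    have h2 := (M.mem_rev_eval y.reverse q).1 h1
    rwa [List.reverse_reverse] at h2
  · intro hsat s t hst
    obtain ⟨ws, hws⟩ := M.rev.det_reachable s
    obtain ⟨wt, hwt⟩ := M.rev.det_reachable t
    rw [← hws, ← hwt, DFA.acceptsFrom_eval, DFA.acceptsFrom_eval, hacc] at hst
    have hsim := (simEquiv M.accepts ws.reverse wt.reverse).2
      (by simpa [List.reverse_reverse] using hst)
    apply Subtype.ext
    ext q
    have h1 : q ∈ s.1 ↔ ws.reverse ∈ M.rightLang q := by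
      rw [← hws, NFA.det_eval]
      exact M.mem_rev_eval ws q
    have h2 : q ∈ t.1 ↔ wt.reverse ∈ M.rightLang q := by
      rw [← hwt, NFA.det_eval]
      exact M.mem_rev_eval wt q
    rw [h1, h2]
    exact ⟨hsat q _ _ hsim, hsat q _ _ (fun K hK => (hsim K hK).symm)⟩

end Atomic

/-- A trim NFA `N` is atomic iff `N^{R D}` (the determinization of the
reversal of `N`) is a minimal DFA, i.e., a DFA with the fewest states accepting `L(N)^R`. -/
theorem atomic_iff_rev_det_minimal {α σ : Type} [Finite α] [Finite σ] (M : NFA α σ)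
    (htrim : M.IsTrim) :
    M.IsAtomic ↔
      (M.rev.det.accepts = M.accepts.reverse ∧
        ∀ (σ' : Type) (_ : Finite σ') (D' : DFA α σ'), D'.accepts = M.accepts.reverse →
          Nat.card M.rev.detStates ≤ Nat.card σ') := by
  have hacc : M.rev.det.accepts = M.accepts.reverse := by
    rw [NFA.det_accepts, NFA.rev_accepts]
  constructor
  · intro hA
    refine ⟨hacc, ?_⟩
    have hinj := (rlInj_iff_sat M).2 (M.sat_of_atomic hA)
    intro σ' hfin D' hD'
    exact DFA.min_of_rlInj _ (M.rev.det_reachable) hinj σ' hfin D' (hD'.trans hacc.symm)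
  · rintro ⟨-, hmin⟩
    have hinj := DFA.rlInj_of_min M.rev.det
      (fun σ' h D' hD' => hmin σ' h D' (hD'.trans hacc))
    exact M.atomic_of_sat htrim ((rlInj_iff_sat M).1 hinj)
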